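/- Let G* : U → Y and G : U → Y be Lipschitz maps between Hilbert spaces, Q a probability measure over probability measures on U with finite second moments, and E_Q(G) := E_{ν'∼Q} E_{u'∼ν'} ‖G*(u') − G(u')‖²_Y. Then for any probability measure μ on U with finite second moment, E_Q(G) ≤ E_{u∼μ}‖G*(u) − G(u)‖²_Y + √(E_{ν'∼Q} c²(G*, G, μ, ν')) · √(E_{ν'∼Q} W2²(μ, ν')), where c(G1, G2, μ, μ') = (Lip(G1)+Lip(G2))·√(4(Lip(G1)+Lip(G2))²(m₂(μ)+m₂(μ')) + 16(‖G1(0)‖² + ‖G2(0)‖²)). -/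

import Mathlib

open MeasureTheory

lemma memLp2_mul_integrable {α : Type*} [MeasurableSpace α] {μ : Measure α} {f g : α → ℝ}
    (hf : MemLp f 2 μ) (hg : MemLp g 2 μ) : Integrable (fun a => f a * g a) μ := by
  rw [← memLp_one_iff_integrable]
  have := hg.smul (φ := f) hf (p := 2) (q := 2) (r := 1)
  · exact this

lemma my_cauchy_schwarz {α : Type*} [MeasurableSpace α] {μ : Measure α} {f g : α → ℝ}
    (hf0 : ∀ᵐ a ∂μ, 0 ≤ f a) (hg0 : ∀ᵐ a ∂μ, 0 ≤ g a)
    (hf : MemLp f 2 μ) (hg : MemLp g 2 μ) :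
    ∫ a, f a * g a ∂μ ≤ Real.sqrt (∫ a, f a ^ 2 ∂μ) * Real.sqrt (∫ a, g a ^ 2 ∂μ) := by
  have hpq : Real.HolderConjugate 2 2 := ⟨by norm_num, by norm_num, by norm_num⟩
  have h2 : ENNReal.ofReal (2:ℝ) = 2 := by norm_num
  have := integral_mul_le_Lp_mul_Lq_of_nonneg hpq hf0 hg0 (by rwa [h2]) (by rwa [h2])
  calc ∫ a, f a * g a ∂μ ≤ (∫ a, f a ^ (2:ℝ) ∂μ) ^ ((1:ℝ)/2) * (∫ a, g a ^ (2:ℝ) ∂μ) ^ ((1:ℝ)/2) := this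
    _ = Real.sqrt (∫ a, f a ^ 2 ∂μ) * Real.sqrt (∫ a, g a ^ 2 ∂μ) := by
        rw [Real.sqrt_eq_rpow, Real.sqrt_eq_rpow]
        norm_num [Real.rpow_natCast]

/-- The 2-Wasserstein distance, defined as the square root of the infimum of
`∫ d(x,y)² dγ` over couplings of `μ` and `ν`. -/
noncomputable def wasserstein2 {X : Type*} [MeasurableSpace X] [PseudoEMetricSpace X]
    (μ ν : Measure X) : ℝ :=
  Real.sqrt
    (⨅ γ ∈ {γ : Measure (X × X) |
        γ.map Prod.fst = μ ∧ γ.map Prod.snd = ν},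
      ∫⁻ z, edist z.1 z.2 ^ 2 ∂γ).toReal

lemma sq_norm_lip_bound {U Y : Type*} [NormedAddCommGroup U] [InnerProductSpace ℝ U]
    [NormedAddCommGroup Y] [InnerProductSpace ℝ Y]
    {F : U → Y} {CF : NNReal} (hF : LipschitzWith CF F) (u : U) :
    ‖F u‖ ^ 2 ≤ 2 * (CF:ℝ)^2 * ‖u‖^2 + 2 * ‖F 0‖^2 := by
  have h1 : ‖F u‖ ≤ (CF:ℝ) * ‖u‖ + ‖F 0‖ := by
    have h := hF.dist_le_mul u 0
    rw [dist_eq_norm, dist_eq_norm, sub_zero] at h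
    have h' := norm_sub_norm_le (F u) (F 0)
    linarith
  have h2 : ‖F u‖ ^ 2 ≤ ((CF:ℝ) * ‖u‖ + ‖F 0‖) ^ 2 :=
    pow_le_pow_left₀ (norm_nonneg _) h1 2
  nlinarith [sq_nonneg ((CF:ℝ) * ‖u‖ - ‖F 0‖)]

lemma integrable_sq_norm_lip {U Y : Type*} [NormedAddCommGroup U] [InnerProductSpace ℝ U]
    [MeasurableSpace U] [BorelSpace U]
    [NormedAddCommGroup Y] [InnerProductSpace ℝ Y]
    {F : U → Y} {CF : NNReal} (hF : LipschitzWith CF F)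
    {μ : Measure U} [IsProbabilityMeasure μ]
    (hμ2 : MeasureTheory.Integrable (fun u => ‖u‖ ^ 2) μ) :
    MeasureTheory.Integrable (fun u => ‖F u‖ ^ 2) μ := by
  have hcont : Continuous fun u => ‖F u‖ ^ 2 := (hF.continuous.norm).pow 2
  refine Integrable.mono' ((hμ2.const_mul (2 * (CF:ℝ)^2)).add (integrable_const (2 * ‖F 0‖^2)))
    hcont.aestronglyMeasurable ?_
  filter_upwards with u
  rw [Real.norm_of_nonneg (by positivity)]
  exact sq_norm_lip_bound hF u

-- second moment bound
lemma int_sq_norm_lip_le {U Y : Type*} [NormedAddCommGroup U] [InnerProductSpace ℝ U]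
    [MeasurableSpace U] [BorelSpace U]
    [NormedAddCommGroup Y] [InnerProductSpace ℝ Y]
    {F : U → Y} {CF : NNReal} (hF : LipschitzWith CF F)
    {μ : Measure U} [IsProbabilityMeasure μ]
    (hμ2 : MeasureTheory.Integrable (fun u => ‖u‖ ^ 2) μ) :
    ∫ u, ‖F u‖ ^ 2 ∂μ ≤ 2 * (CF:ℝ)^2 * (∫ u, ‖u‖^2 ∂μ) + 2 * ‖F 0‖^2 := by
  have h := integral_mono (integrable_sq_norm_lip hF hμ2)
    ((hμ2.const_mul (2 * (CF:ℝ)^2)).add (integrable_const (2 * ‖F 0‖^2)))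
    (fun u => sq_norm_lip_bound hF u)
  simpa [integral_add (hμ2.const_mul (2 * (CF:ℝ)^2)) (integrable_const (2 * ‖F 0‖^2)),
    integral_const_mul, measure_univ] using h

section Shift
variable {U Y : Type*}
    [NormedAddCommGroup U] [InnerProductSpace ℝ U]
    [SecondCountableTopology U] [MeasurableSpace U] [BorelSpace U]
    [NormedAddCommGroup Y] [InnerProductSpace ℝ Y]

/-- key bound for one coupling -/
lemma coupling_bound (F : U → Y) (CF : NNReal) (hF : LipschitzWith CF F)
    (μ ν : Measure U) (hμp : IsProbabilityMeasure μ) (hνp : IsProbabilityMeasure ν)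
    (hμ2 : Integrable (fun u => ‖u‖ ^ 2) μ) (hν2 : Integrable (fun u => ‖u‖ ^ 2) ν)
    (γ : Measure (U × U)) (hfst : γ.map Prod.fst = μ) (hsnd : γ.map Prod.snd = ν)
    (hfin : (∫⁻ z, edist z.1 z.2 ^ 2 ∂γ) ≠ ⊤) :
    ∫ u, ‖F u‖ ^ 2 ∂ν ≤ ∫ u, ‖F u‖ ^ 2 ∂μ +
      ((CF:ℝ) * Real.sqrt (4*(CF:ℝ)^2*((∫ u, ‖u‖^2 ∂μ) + ∫ u, ‖u‖^2 ∂ν) + 8*‖F 0‖^2)) *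
        Real.sqrt ((∫⁻ z, edist z.1 z.2 ^ 2 ∂γ).toReal) := by
  haveI := hμp; haveI := hνp
  haveI : IsProbabilityMeasure γ := by
    constructor
    have h := congrArg (fun m : Measure U => m Set.univ) hfst
    simp only [Measure.map_apply measurable_fst MeasurableSet.univ, Set.preimage_univ] at h
    rw [h]; exact measure_univ
  set A := ∫ u, ‖F u‖ ^ 2 ∂μ with hA
  set B := ∫ u, ‖F u‖ ^ 2 ∂ν with hB
  have hFcont : Continuous F := hF.continuous
  have hd2cont : Continuous fun z : U × U => ‖z.1 - z.2‖ ^ 2 :=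
    ((continuous_fst.sub continuous_snd).norm).pow 2
  have hlint : ∀ z : U × U, ENNReal.ofReal (‖z.1 - z.2‖ ^ 2) = edist z.1 z.2 ^ 2 := by
    intro z
    rw [edist_eq_enorm_sub, ENNReal.ofReal_pow (norm_nonneg _), ofReal_norm_eq_enorm]
  -- integrability of the squared distance
  have hd2int : Integrable (fun z : U × U => ‖z.1 - z.2‖ ^ 2) γ := by
    refine ⟨hd2cont.aestronglyMeasurable, ?_⟩
    rw [hasFiniteIntegral_iff_ofReal (Filter.Eventually.of_forall fun z => by positivity)]
    rw [lintegral_congr hlint]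
    exact hfin.lt_top
  -- the real integral of the squared distance equals the cost
  have hdI : ∫ z : U × U, ‖z.1 - z.2‖ ^ 2 ∂γ = (∫⁻ z, edist z.1 z.2 ^ 2 ∂γ).toReal := by
    rw [integral_eq_lintegral_of_nonneg_ae (Filter.Eventually.of_forall fun z => by positivity)
      hd2cont.aestronglyMeasurable]
    rw [lintegral_congr hlint]
  -- marginal transfers
  have hFμ : Integrable (fun u => ‖F u‖ ^ 2) μ := integrable_sq_norm_lip hF hμ2
  have hFν : Integrable (fun u => ‖F u‖ ^ 2) ν := integrable_sq_norm_lip hF hν2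
  have hsm1 : AEStronglyMeasurable (fun u => ‖F u‖ ^ 2) (γ.map Prod.fst) :=
    ((hFcont.norm).pow 2).aestronglyMeasurable
  have hsm2 : AEStronglyMeasurable (fun u => ‖F u‖ ^ 2) (γ.map Prod.snd) :=
    ((hFcont.norm).pow 2).aestronglyMeasurable
  have hAtrans : A = ∫ z : U × U, ‖F z.1‖ ^ 2 ∂γ := by
    rw [hA, ← hfst, integral_map measurable_fst.aemeasurable hsm1]
  have hBtrans : B = ∫ z : U × U, ‖F z.2‖ ^ 2 ∂γ := by
    rw [hB, ← hsnd, integral_map measurable_snd.aemeasurable hsm2]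
  have hg1 : Integrable (fun z : U × U => ‖F z.1‖ ^ 2) γ := by
    have h := (integrable_map_measure hsm1 measurable_fst.aemeasurable).mp
      (by rw [hfst]; exact hFμ)
    simpa [Function.comp_def] using h
  have hg2 : Integrable (fun z : U × U => ‖F z.2‖ ^ 2) γ := by
    have h := (integrable_map_measure hsm2 measurable_snd.aemeasurable).mp
      (by rw [hsnd]; exact hFν)
    simpa [Function.comp_def] using h
  -- MemLp facts
  have hds : MemLp (fun z : U × U => ‖z.1 - z.2‖) 2 γ :=
    (memLp_two_iff_integrable_sq
      ((continuous_fst.sub continuous_snd).norm).aestronglyMeasurable).2 hd2int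
  have hns1 : MemLp (fun z : U × U => ‖F z.1‖) 2 γ :=
    (memLp_two_iff_integrable_sq
      ((hFcont.comp continuous_fst).norm).aestronglyMeasurable).2 hg1
  have hns2 : MemLp (fun z : U × U => ‖F z.2‖) 2 γ :=
    (memLp_two_iff_integrable_sq
      ((hFcont.comp continuous_snd).norm).aestronglyMeasurable).2 hg2
  have hs : MemLp (fun z : U × U => ‖F z.1‖ + ‖F z.2‖) 2 γ := hns1.add hns2
  have hdsint : Integrable (fun z : U × U => ‖z.1 - z.2‖ * (‖F z.1‖ + ‖F z.2‖)) γ :=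
    memLp2_mul_integrable hds hs
  -- pointwise inequality
  have hpt : ∀ z : U × U, ‖F z.2‖ ^ 2 ≤
      ‖F z.1‖ ^ 2 + (CF:ℝ) * (‖z.1 - z.2‖ * (‖F z.1‖ + ‖F z.2‖)) := by
    intro z
    have hlip : ‖F z.2‖ - ‖F z.1‖ ≤ (CF:ℝ) * ‖z.1 - z.2‖ := by
      have h := hF.dist_le_mul z.2 z.1
      have h' := norm_sub_norm_le (F z.2) (F z.1)
      rw [dist_eq_norm, dist_eq_norm, norm_sub_rev z.2 z.1] at h
      linarith
    nlinarith [norm_nonneg (F z.1), norm_nonneg (F z.2), norm_nonneg (z.1 - z.2),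
      CF.coe_nonneg, mul_nonneg (mul_nonneg CF.coe_nonneg (norm_nonneg (z.1 - z.2)))
        (add_nonneg (norm_nonneg (F z.1)) (norm_nonneg (F z.2)))]
  -- bound on ∫ s²
  have hsq : ∫ z : U × U, (‖F z.1‖ + ‖F z.2‖) ^ 2 ∂γ ≤
      4*(CF:ℝ)^2*((∫ u, ‖u‖^2 ∂μ) + ∫ u, ‖u‖^2 ∂ν) + 8*‖F 0‖^2 := by
    have hstep : ∫ z : U × U, (‖F z.1‖ + ‖F z.2‖) ^ 2 ∂γ ≤
        ∫ z : U × U, (2 * ‖F z.1‖ ^ 2 + 2 * ‖F z.2‖ ^ 2) ∂γ := by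
      refine integral_mono hs.integrable_sq ((hg1.const_mul 2).add (hg2.const_mul 2)) ?_
      intro z
      dsimp only
      nlinarith [sq_nonneg (‖F z.1‖ - ‖F z.2‖)]
    have heq : ∫ z : U × U, (2 * ‖F z.1‖ ^ 2 + 2 * ‖F z.2‖ ^ 2) ∂γ = 2*A + 2*B := by
      rw [integral_add (hg1.const_mul 2) (hg2.const_mul 2), integral_const_mul,
        integral_const_mul, hAtrans, hBtrans]
    have hAle := int_sq_norm_lip_le hF hμ2
    have hBle := int_sq_norm_lip_le hF hν2
    rw [heq] at hstep
    rw [← hA] at hAle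
    rw [← hB] at hBle
    linarith
  -- Cauchy-Schwarz
  have hcs := my_cauchy_schwarz (μ := γ)
    (Filter.Eventually.of_forall fun z : U × U => norm_nonneg (z.1 - z.2))
    (Filter.Eventually.of_forall fun z : U × U =>
      add_nonneg (norm_nonneg (F z.1)) (norm_nonneg (F z.2))) hds hs
  -- main chain
  have hmain : B ≤ A + (CF:ℝ) * ∫ z : U × U, ‖z.1 - z.2‖ * (‖F z.1‖ + ‖F z.2‖) ∂γ := by
    rw [hBtrans, hAtrans]
    have h : ∫ z : U × U, ‖F z.2‖ ^ 2 ∂γ ≤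
        ∫ z : U × U, (‖F z.1‖ ^ 2 + (CF:ℝ) * (‖z.1 - z.2‖ * (‖F z.1‖ + ‖F z.2‖))) ∂γ :=
      integral_mono hg2 (hg1.add (hdsint.const_mul (CF:ℝ))) hpt
    rwa [integral_add hg1 (hdsint.const_mul (CF:ℝ)), integral_const_mul] at h
  have hsqrt2 : Real.sqrt (∫ z : U × U, (‖F z.1‖ + ‖F z.2‖) ^ 2 ∂γ) ≤
      Real.sqrt (4*(CF:ℝ)^2*((∫ u, ‖u‖^2 ∂μ) + ∫ u, ‖u‖^2 ∂ν) + 8*‖F 0‖^2) :=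
    Real.sqrt_le_sqrt hsq
  have hsqrt1 : Real.sqrt (∫ z : U × U, ‖z.1 - z.2‖ ^ 2 ∂γ) =
      Real.sqrt ((∫⁻ z, edist z.1 z.2 ^ 2 ∂γ).toReal) := by rw [hdI]
  calc B ≤ A + (CF:ℝ) * ∫ z : U × U, ‖z.1 - z.2‖ * (‖F z.1‖ + ‖F z.2‖) ∂γ := hmain
    _ ≤ A + (CF:ℝ) * (Real.sqrt (∫ z : U × U, ‖z.1 - z.2‖ ^ 2 ∂γ) *
          Real.sqrt (∫ z : U × U, (‖F z.1‖ + ‖F z.2‖) ^ 2 ∂γ)) := by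
        have := mul_le_mul_of_nonneg_left hcs CF.coe_nonneg
        linarith
    _ ≤ A + ((CF:ℝ) * Real.sqrt (4*(CF:ℝ)^2*((∫ u, ‖u‖^2 ∂μ) + ∫ u, ‖u‖^2 ∂ν) + 8*‖F 0‖^2)) *
          Real.sqrt ((∫⁻ z, edist z.1 z.2 ^ 2 ∂γ).toReal) := by
        rw [hsqrt1] at *
        have h1 : (CF:ℝ) * (Real.sqrt ((∫⁻ z, edist z.1 z.2 ^ 2 ∂γ).toReal) *
            Real.sqrt (∫ z : U × U, (‖F z.1‖ + ‖F z.2‖) ^ 2 ∂γ)) ≤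
            (CF:ℝ) * (Real.sqrt ((∫⁻ z, edist z.1 z.2 ^ 2 ∂γ).toReal) *
            Real.sqrt (4*(CF:ℝ)^2*((∫ u, ‖u‖^2 ∂μ) + ∫ u, ‖u‖^2 ∂ν) + 8*‖F 0‖^2)) := by
          apply mul_le_mul_of_nonneg_left _ CF.coe_nonneg
          exact mul_le_mul_of_nonneg_left hsqrt2 (Real.sqrt_nonneg _)
        nlinarith [h1]

lemma shift_bound (F : U → Y) (CF : NNReal) (hF : LipschitzWith CF F)
    (μ ν : Measure U) (hμp : IsProbabilityMeasure μ) (hνp : IsProbabilityMeasure ν)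
    (hμ2 : Integrable (fun u => ‖u‖ ^ 2) μ) (hν2 : Integrable (fun u => ‖u‖ ^ 2) ν) :
    ∫ u, ‖F u‖ ^ 2 ∂ν ≤ ∫ u, ‖F u‖ ^ 2 ∂μ +
      ((CF:ℝ) * Real.sqrt (4*(CF:ℝ)^2*((∫ u, ‖u‖^2 ∂μ) + ∫ u, ‖u‖^2 ∂ν) + 8*‖F 0‖^2)) *
        wasserstein2 μ ν := by
  haveI := hμp; haveI := hνp
  set K : ℝ := (CF:ℝ) * Real.sqrt (4*(CF:ℝ)^2*((∫ u, ‖u‖^2 ∂μ) + ∫ u, ‖u‖^2 ∂ν) + 8*‖F 0‖^2)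
    with hKdef
  have hK0 : 0 ≤ K := mul_nonneg CF.coe_nonneg (Real.sqrt_nonneg _)
  set A := ∫ u, ‖F u‖ ^ 2 ∂μ with hA
  set B := ∫ u, ‖F u‖ ^ 2 ∂ν with hB
  set S : Set (Measure (U × U)) :=
    {γ : Measure (U × U) | γ.map Prod.fst = μ ∧ γ.map Prod.snd = ν} with hS
  set I : ENNReal := ⨅ γ ∈ S, ∫⁻ z, edist z.1 z.2 ^ 2 ∂γ with hI
  have hW : wasserstein2 μ ν = Real.sqrt I.toReal := rfl
  have hlint : ∀ z : U × U, ENNReal.ofReal (‖z.1 - z.2‖ ^ 2) = edist z.1 z.2 ^ 2 := by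
    intro z
    rw [edist_eq_enorm_sub, ENNReal.ofReal_pow (norm_nonneg _), ofReal_norm_eq_enorm]
  -- the product coupling has finite cost, so I ≠ ⊤
  have hIne : I ≠ ⊤ := by
    set γ₀ := μ.prod ν with hγ₀
    have hfst0 : γ₀.map Prod.fst = μ := by
      rw [hγ₀, Measure.map_fst_prod]; simp [measure_univ]
    have hsnd0 : γ₀.map Prod.snd = ν := by
      rw [hγ₀, Measure.map_snd_prod]; simp [measure_univ]
    have h1int : Integrable (fun z : U × U => ‖z.1‖ ^ 2) γ₀ := by
      have h := (integrable_map_measure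
        ((continuous_norm.pow 2).aestronglyMeasurable) measurable_fst.aemeasurable).mp
        (by rw [hfst0]; exact hμ2)
      simpa [Function.comp_def] using h
    have h2int : Integrable (fun z : U × U => ‖z.2‖ ^ 2) γ₀ := by
      have h := (integrable_map_measure
        ((continuous_norm.pow 2).aestronglyMeasurable) measurable_snd.aemeasurable).mp
        (by rw [hsnd0]; exact hν2)
      simpa [Function.comp_def] using h
    have hd2int : Integrable (fun z : U × U => ‖z.1 - z.2‖ ^ 2) γ₀ := by
      refine Integrable.mono'
        (g := fun z : U × U => 2 * ‖z.1‖ ^ 2 + 2 * ‖z.2‖ ^ 2)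
        ((h1int.const_mul 2).add (h2int.const_mul 2))
        (((continuous_fst.sub continuous_snd).norm.pow 2).aestronglyMeasurable) ?_
      filter_upwards with z
      rw [Real.norm_of_nonneg (by positivity)]
      have h := norm_sub_le z.1 z.2
      have h2 : ‖z.1 - z.2‖ ^ 2 ≤ (‖z.1‖ + ‖z.2‖) ^ 2 :=
        pow_le_pow_left₀ (norm_nonneg _) h 2
      nlinarith [sq_nonneg (‖z.1‖ - ‖z.2‖)]
    have hcost : (∫⁻ z, edist z.1 z.2 ^ 2 ∂γ₀) ≠ ⊤ := by
      have hfi := hd2int.2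
      rw [hasFiniteIntegral_iff_ofReal
        (Filter.Eventually.of_forall fun z : U × U => by positivity)] at hfi
      rw [← lintegral_congr hlint]
      exact hfi.ne
    exact ne_top_of_le_ne_top hcost (iInf₂_le γ₀ ⟨hfst0, hsnd0⟩)
  -- for every ε > 0 pick a near-optimal coupling
  have hε : ∀ ε : ℝ, 0 < ε → B ≤ A + K * Real.sqrt (I.toReal + ε) := by
    intro ε hεpos
    have hlt : I < I + ENNReal.ofReal ε :=
      ENNReal.lt_add_right hIne (by simp [ENNReal.ofReal_eq_zero, not_le, hεpos])
    rw [hI, iInf_lt_iff] at hlt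
    obtain ⟨γ, hγlt⟩ := hlt
    rw [iInf_lt_iff] at hγlt
    obtain ⟨hγS, hγlt⟩ := hγlt
    have hfin : (∫⁻ z, edist z.1 z.2 ^ 2 ∂γ) ≠ ⊤ :=
      (hγlt.trans (ENNReal.add_lt_top.mpr ⟨hIne.lt_top, ENNReal.ofReal_lt_top⟩)).ne
    have hcb := coupling_bound F CF hF μ ν hμp hνp hμ2 hν2 γ hγS.1 hγS.2 hfin
    have htoReal : (∫⁻ z, edist z.1 z.2 ^ 2 ∂γ).toReal ≤ I.toReal + ε := by
      have h := ENNReal.toReal_mono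
        (ENNReal.add_ne_top.mpr ⟨hIne, ENNReal.ofReal_ne_top⟩) hγlt.le
      rwa [ENNReal.toReal_add hIne ENNReal.ofReal_ne_top,
        ENNReal.toReal_ofReal hεpos.le] at h
    calc B ≤ A + K * Real.sqrt ((∫⁻ z, edist z.1 z.2 ^ 2 ∂γ).toReal) := hcb
      _ ≤ A + K * Real.sqrt (I.toReal + ε) :=
          (add_le_add_iff_left A).2 (mul_le_mul_of_nonneg_left (Real.sqrt_le_sqrt htoReal) hK0)
  -- take ε → 0
  rw [hW]
  refine le_of_forall_pos_le_add ?_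
  intro ε hε'
  set δ : ℝ := (ε / (K + 1)) ^ 2 with hδdef
  have hδpos : (0:ℝ) < δ := by positivity
  have h1 := hε δ hδpos
  have h2 : Real.sqrt (I.toReal + δ) ≤ Real.sqrt I.toReal + Real.sqrt δ := by
    rw [show Real.sqrt I.toReal + Real.sqrt δ
        = Real.sqrt ((Real.sqrt I.toReal + Real.sqrt δ) ^ 2) from
      (Real.sqrt_sq (by positivity)).symm]
    apply Real.sqrt_le_sqrt
    nlinarith [Real.sq_sqrt (ENNReal.toReal_nonneg (a := I)), Real.sq_sqrt hδpos.le,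
      Real.sqrt_nonneg I.toReal, Real.sqrt_nonneg δ]
  have h3 : Real.sqrt δ = ε / (K + 1) := Real.sqrt_sq (by positivity)
  have h4 : K * (ε / (K + 1)) ≤ ε := by
    calc K * (ε / (K + 1)) ≤ (K + 1) * (ε / (K + 1)) :=
          mul_le_mul_of_nonneg_right (by linarith) (by positivity)
      _ = ε := by field_simp
  have h5 := mul_le_mul_of_nonneg_left h2 hK0
  rw [h3] at h5
  nlinarith [h5]

end Shift

/-- basic inequality: for Lipschitz maps `G*, G` and a probability measure `Q`
over probability measures on `U` with finite second moments,
`E_Q(G) ≤ E_{u∼μ}‖G*(u) − G(u)‖² + √(E_{ν'∼Q} c²(G*,G,μ,ν')) · √(E_{ν'∼Q} W₂²(μ,ν'))`,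
where `c(G₁,G₂,μ,μ') = C·√(4C²(m₂(μ)+m₂(μ')) + 16(‖G₁0‖²+‖G₂0‖²))` with `C = Lip(G₁)+Lip(G₂)`. -/
theorem basic_inequality_average
    {U Y : Type*}
    [NormedAddCommGroup U] [InnerProductSpace ℝ U] [CompleteSpace U]
    [SecondCountableTopology U] [MeasurableSpace U] [BorelSpace U]
    [NormedAddCommGroup Y] [InnerProductSpace ℝ Y] [CompleteSpace Y]
    [SecondCountableTopology Y]
    (Gstar G : U → Y) (K1 K2 : NNReal)
    (h1 : LipschitzWith K1 Gstar) (h2 : LipschitzWith K2 G)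
    (C : ℝ) (hC : C = (K1 : ℝ) + (K2 : ℝ))
    (c : Measure U → Measure U → ℝ)
    (hc : ∀ ρ ρ' : Measure U, c ρ ρ' =
      C * Real.sqrt (4 * C ^ 2 * ((∫ u, ‖u‖ ^ 2 ∂ρ) + ∫ u, ‖u‖ ^ 2 ∂ρ') +
        16 * (‖Gstar 0‖ ^ 2 + ‖G 0‖ ^ 2)))
    (Q : Measure (Measure U)) [IsProbabilityMeasure Q]
    (hQae : ∀ᵐ ν' ∂Q, IsProbabilityMeasure ν' ∧ Integrable (fun u => ‖u‖ ^ 2) ν')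
    (μ : Measure U) [IsProbabilityMeasure μ]
    (hμ2 : Integrable (fun u => ‖u‖ ^ 2) μ)
    (hi1 : Integrable (fun ν' : Measure U => ∫ u, ‖Gstar u - G u‖ ^ 2 ∂ν') Q)
    (hi2 : Integrable (fun ν' : Measure U => (c μ ν') ^ 2) Q)
    (hi3 : Integrable (fun ν' : Measure U => (wasserstein2 μ ν') ^ 2) Q) :
    ∫ ν', (∫ u, ‖Gstar u - G u‖ ^ 2 ∂ν') ∂Q ≤
      (∫ u, ‖Gstar u - G u‖ ^ 2 ∂μ) +
        Real.sqrt (∫ ν', (c μ ν') ^ 2 ∂Q) *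
          Real.sqrt (∫ ν', (wasserstein2 μ ν') ^ 2 ∂Q) := by
  have hC0 : 0 ≤ C := by rw [hC]; positivity
  set F : U → Y := fun u => Gstar u - G u with hFdef
  have hF : LipschitzWith (K1 + K2) F := h1.sub h2
  have hCeq : ((K1 + K2 : NNReal) : ℝ) = C := by rw [hC]; push_cast; ring
  set A := ∫ u, ‖F u‖ ^ 2 ∂μ with hA
  have hW0 : ∀ ν' : Measure U, 0 ≤ wasserstein2 μ ν' := fun ν' => Real.sqrt_nonneg _
  have hc0 : ∀ ν' : Measure U, 0 ≤ c μ ν' := fun ν' => by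
    rw [hc]; exact mul_nonneg hC0 (Real.sqrt_nonneg _)
  -- the pointwise (in ν') bound
  have hae : ∀ᵐ ν' ∂Q, (∫ u, ‖Gstar u - G u‖ ^ 2 ∂ν') ≤
      A + c μ ν' * wasserstein2 μ ν' := by
    filter_upwards [hQae] with ν' hν'
    obtain ⟨hp, h2m⟩ := hν'
    have hsb := shift_bound F (K1 + K2) hF μ ν' inferInstance hp hμ2 h2m
    have hKle : ((K1 + K2 : NNReal) : ℝ) *
        Real.sqrt (4 * ((K1 + K2 : NNReal) : ℝ) ^ 2 *
          ((∫ u, ‖u‖ ^ 2 ∂μ) + ∫ u, ‖u‖ ^ 2 ∂ν') + 8 * ‖F 0‖ ^ 2) ≤ c μ ν' := by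
      rw [hc, hCeq]
      refine mul_le_mul_of_nonneg_left (Real.sqrt_le_sqrt ?_) hC0
      have hF0 : ‖F 0‖ ≤ ‖Gstar 0‖ + ‖G 0‖ := norm_sub_le _ _
      have hF0' : ‖F 0‖ ^ 2 ≤ (‖Gstar 0‖ + ‖G 0‖) ^ 2 :=
        pow_le_pow_left₀ (norm_nonneg _) hF0 2
      nlinarith [sq_nonneg (‖Gstar 0‖ - ‖G 0‖)]
    calc (∫ u, ‖Gstar u - G u‖ ^ 2 ∂ν') = ∫ u, ‖F u‖ ^ 2 ∂ν' := rfl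
      _ ≤ A + ((K1 + K2 : NNReal) : ℝ) *
          Real.sqrt (4 * ((K1 + K2 : NNReal) : ℝ) ^ 2 *
            ((∫ u, ‖u‖ ^ 2 ∂μ) + ∫ u, ‖u‖ ^ 2 ∂ν') + 8 * ‖F 0‖ ^ 2) *
          wasserstein2 μ ν' := hsb
      _ ≤ A + c μ ν' * wasserstein2 μ ν' := by
          exact (add_le_add_iff_left A).2 (mul_le_mul_of_nonneg_right hKle (hW0 ν'))
  -- MemLp facts over Q
  have haesm_c : AEStronglyMeasurable (fun ν' : Measure U => c μ ν') Q := by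
    have h := hi2.aestronglyMeasurable.aemeasurable
    have h' : AEMeasurable (fun ν' : Measure U => Real.sqrt ((c μ ν') ^ 2)) Q :=
      Real.continuous_sqrt.measurable.comp_aemeasurable h
    refine (aestronglyMeasurable_iff_aemeasurable).2 ?_
    convert h' using 1
    funext ν'
    rw [Real.sqrt_sq (hc0 ν')]
  have haesm_w : AEStronglyMeasurable (fun ν' : Measure U => wasserstein2 μ ν') Q := by
    have h := hi3.aestronglyMeasurable.aemeasurable
    have h' : AEMeasurable (fun ν' : Measure U => Real.sqrt ((wasserstein2 μ ν') ^ 2)) Q :=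
      Real.continuous_sqrt.measurable.comp_aemeasurable h
    refine (aestronglyMeasurable_iff_aemeasurable).2 ?_
    convert h' using 1
    funext ν'
    rw [Real.sqrt_sq (hW0 ν')]
  have hMc : MemLp (fun ν' : Measure U => c μ ν') 2 Q :=
    (memLp_two_iff_integrable_sq haesm_c).2 hi2
  have hMw : MemLp (fun ν' : Measure U => wasserstein2 μ ν') 2 Q :=
    (memLp_two_iff_integrable_sq haesm_w).2 hi3
  have hprod : Integrable (fun ν' : Measure U => c μ ν' * wasserstein2 μ ν') Q :=
    memLp2_mul_integrable hMc hMw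
  have hstep : ∫ ν', (∫ u, ‖Gstar u - G u‖ ^ 2 ∂ν') ∂Q ≤
      ∫ ν', (A + c μ ν' * wasserstein2 μ ν') ∂Q :=
    integral_mono_ae hi1 ((integrable_const A).add hprod) hae
  have heq : ∫ ν', (A + c μ ν' * wasserstein2 μ ν') ∂Q
      = A + ∫ ν', c μ ν' * wasserstein2 μ ν' ∂Q := by
    rw [integral_add (integrable_const A) hprod, integral_const]
    simp
  have hcs := my_cauchy_schwarz (μ := Q)
    (Filter.Eventually.of_forall hc0) (Filter.Eventually.of_forall hW0) hMc hMw
  rw [heq] at hstep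
  calc ∫ ν', (∫ u, ‖Gstar u - G u‖ ^ 2 ∂ν') ∂Q
      ≤ A + ∫ ν', c μ ν' * wasserstein2 μ ν' ∂Q := hstep
    _ ≤ A + Real.sqrt (∫ ν', (c μ ν') ^ 2 ∂Q) *
          Real.sqrt (∫ ν', (wasserstein2 μ ν') ^ 2 ∂Q) := (add_le_add_iff_left A).2 hcs
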